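/- Fix a positive integer l, let a_r be the coefficient of x^r in (x²+x+1)^{l-1}(2x+1)(x+2)(x-1), and define P_l(e,f) := Σ_{r=0}^{2l+1} a_r (e)_r (−f)_{2l+1−r}. Then P_l(2e, e+l) = 0 for all e. -/

import Mathlib

open Finset Polynomial

noncomputable section

/-- rising factorial -/
def rf {R : Type*} [CommRing R] (a : R) (k : ℕ) : R := ∏ i ∈ Finset.range k, (a + i)

/-- the polynomial `(x²+x+1)^{l-1}(2x+1)(x+2)(x-1)` -/
def APoly (l : ℕ) : Polynomial ℚ :=
  (X ^ 2 + X + 1) ^ (l - 1) * (2 * X + 1) * (X + 2) * (X - 1)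

/-- `P_l(e,f) = Σ_r a_r (e)_r (−f)_{2l+1−r}` -/
def PP (l : ℕ) {K : Type*} [Field K] (e f : K) : K :=
  ∑ r ∈ Finset.range (2 * l + 2), ((APoly l).coeff r : K) * rf e r * rf (-f) (2 * l + 1 - r)

/- ### auxiliary lemmas -/

lemma rf_succ {R : Type*} [CommRing R] (a : R) (k : ℕ) :
    rf a (k + 1) = rf a k * (a + k) := by
  simp [rf, Finset.prod_range_succ]

lemma rf_natCast (m k : ℕ) : rf (m : ℚ) k = (m.ascFactorial k : ℚ) := by
  induction k with
  | zero => simp [rf]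
  | succ k ih =>
      rw [rf_succ, ih, Nat.ascFactorial_succ]
      push_cast
      ring

lemma rf_neg_natCast (m k : ℕ) : rf (-(m : ℚ)) k = (-1) ^ k * (m.descFactorial k : ℚ) := by
  induction k with
  | zero => simp [rf]
  | succ k ih =>
      rw [rf_succ, ih, Nat.descFactorial_succ]
      by_cases h : k ≤ m
      · push_cast [h]
        ring
      · rw [Nat.descFactorial_eq_zero_iff_lt.2 (by omega)]
        push_cast
        ring

lemma eval_rf (p : Polynomial ℚ) (x : ℚ) (k : ℕ) : (rf p k).eval x = rf (p.eval x) k := by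
  unfold rf
  rw [Polynomial.eval_prod]
  exact Finset.prod_congr rfl (by intro i _; simp)

lemma APoly_natDegree_le (l : ℕ) (hl : 0 < l) : (APoly l).natDegree ≤ 2 * l + 1 := by
  unfold APoly
  have h0 : (((X : Polynomial ℚ) ^ 2 + X + 1)).natDegree ≤ 2 := by compute_degree
  have hq : ((((X : Polynomial ℚ) ^ 2 + X + 1)) ^ (l - 1)).natDegree ≤ 2 * l - 2 := by
    refine le_trans (natDegree_pow_le) ?_
    calc (l-1) * (((X : Polynomial ℚ) ^ 2 + X + 1)).natDegree ≤ (l-1) * 2 :=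
          Nat.mul_le_mul_left _ h0
      _ ≤ 2 * l - 2 := by omega
  have h1 : ((2 * X + 1 : Polynomial ℚ)).natDegree ≤ 1 := by compute_degree
  have h2 : ((X + 2 : Polynomial ℚ)).natDegree ≤ 1 := by compute_degree
  have h3 : ((X - 1 : Polynomial ℚ)).natDegree ≤ 1 := by compute_degree
  calc ((X ^ 2 + X + 1) ^ (l - 1) * (2 * X + 1) * (X + 2) * (X - 1) : Polynomial ℚ).natDegree
      ≤ ((X ^ 2 + X + 1) ^ (l - 1) * (2 * X + 1) * (X + 2) : Polynomial ℚ).natDegree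
        + (X - 1 : Polynomial ℚ).natDegree := natDegree_mul_le
    _ ≤ (((X ^ 2 + X + 1) ^ (l - 1) * (2 * X + 1) : Polynomial ℚ).natDegree
        + (X + 2 : Polynomial ℚ).natDegree) + (X - 1 : Polynomial ℚ).natDegree := by
          gcongr
          exact natDegree_mul_le
    _ ≤ ((((X ^ 2 + X + 1) ^ (l - 1) : Polynomial ℚ).natDegree
        + (2 * X + 1 : Polynomial ℚ).natDegree) + (X + 2 : Polynomial ℚ).natDegree)
        + (X - 1 : Polynomial ℚ).natDegree := by
          gcongr
          exact natDegree_mul_le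
    _ ≤ ((2 * l - 2) + 1) + 1 + 1 := by gcongr
    _ ≤ 2 * l + 1 := by omega

lemma reflect_quad : reflect 2 ((X : Polynomial ℚ) ^ 2 + X + 1) = X ^ 2 + X + 1 := by
  have h : ((X : Polynomial ℚ) ^ 2 + X + 1) = X ^ 2 + X ^ 1 + C 1 := by
    simp [pow_one]
  rw [h, reflect_add, reflect_add, reflect_monomial, reflect_monomial, reflect_C]
  have r2 : revAt 2 2 = 0 := by rw [revAt_le (by norm_num)]
  have r1 : revAt 2 1 = 1 := by rw [revAt_le (by norm_num)]
  rw [r2, r1]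
  simp [pow_one]
  ring

lemma reflect_quad_pow (m : ℕ) :
    reflect (2 * m) (((X : Polynomial ℚ) ^ 2 + X + 1) ^ m)
      = ((X : Polynomial ℚ) ^ 2 + X + 1) ^ m := by
  induction m with
  | zero => simp
  | succ m ih =>
      have h0 : (((X : Polynomial ℚ) ^ 2 + X + 1)).natDegree ≤ 2 := by compute_degree
      have hp : ((((X : Polynomial ℚ) ^ 2 + X + 1)) ^ m).natDegree ≤ 2 * m := by
        refine le_trans natDegree_pow_le ?_
        calc m * (((X : Polynomial ℚ) ^ 2 + X + 1)).natDegree ≤ m * 2 :=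
              Nat.mul_le_mul_left _ h0
          _ = 2 * m := by ring
      rw [pow_succ, show 2 * (m + 1) = 2 * m + 2 by ring,
        reflect_mul _ _ hp h0, ih, reflect_quad]

lemma reflect_APoly (l : ℕ) (hl : 0 < l) : reflect (2 * l + 1) (APoly l) = -APoly l := by
  obtain ⟨m, rfl⟩ : ∃ m, l = m + 1 := ⟨l - 1, by omega⟩
  unfold APoly
  simp only [Nat.add_sub_cancel]
  have h0 : (((X : Polynomial ℚ) ^ 2 + X + 1)).natDegree ≤ 2 := by compute_degree
  have hq : ((((X : Polynomial ℚ) ^ 2 + X + 1)) ^ m).natDegree ≤ 2 * m := by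
    refine le_trans natDegree_pow_le ?_
    calc m * (((X : Polynomial ℚ) ^ 2 + X + 1)).natDegree ≤ m * 2 := Nat.mul_le_mul_left _ h0
      _ = 2 * m := by ring
  have h1 : ((2 * X + 1 : Polynomial ℚ)).natDegree ≤ 1 := by compute_degree
  have h2 : ((X + 2 : Polynomial ℚ)).natDegree ≤ 1 := by compute_degree
  have h3 : ((X - 1 : Polynomial ℚ)).natDegree ≤ 1 := by compute_degree
  have hm1 : (((X ^ 2 + X + 1) ^ m * (2 * X + 1) : Polynomial ℚ)).natDegree ≤ 2 * m + 1 :=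
    le_trans natDegree_mul_le (by omega)
  have hm2 : (((X ^ 2 + X + 1) ^ m * (2 * X + 1) * (X + 2) : Polynomial ℚ)).natDegree
      ≤ 2 * m + 1 + 1 := le_trans natDegree_mul_le (by omega)
  rw [show 2 * (m + 1) + 1 = (2 * m + 1 + 1) + 1 by ring]
  rw [reflect_mul _ _ hm2 h3, show 2 * m + 1 + 1 = (2 * m + 1) + 1 from rfl,
    reflect_mul _ _ hm1 h2, reflect_mul _ _ hq h1, reflect_quad_pow]
  have hC2 : (C (2:ℚ) : Polynomial ℚ) = 2 := map_ofNat C 2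
  have hCm1 : (C (-1:ℚ) : Polynomial ℚ) = -1 := by rw [map_neg, C_1]
  have e1 : ((2 * X + 1 : Polynomial ℚ)) = C 2 * X + C 1 := by rw [hC2, C_1]
  have e2 : ((X + 2 : Polynomial ℚ)) = X ^ 1 + C 2 := by rw [hC2, pow_one]
  have e3 : ((X - 1 : Polynomial ℚ)) = X ^ 1 + C (-1) := by rw [hCm1, pow_one]; ring
  have r1 : reflect 1 ((2 * X + 1 : Polynomial ℚ)) = X + 2 := by
    rw [e1, reflect_add, reflect_C_mul, reflect_one_X, reflect_C]
    rw [hC2, C_1, pow_one]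
    ring
  have r2 : reflect 1 ((X + 2 : Polynomial ℚ)) = 2 * X + 1 := by
    rw [e2, reflect_add, reflect_monomial, reflect_C]
    have h11 : revAt 1 1 = 0 := by rw [revAt_le (by norm_num)]
    rw [h11, hC2, pow_zero, pow_one]
    ring
  have r3 : reflect 1 ((X - 1 : Polynomial ℚ)) = 1 - X := by
    rw [e3, reflect_add, reflect_monomial, reflect_C]
    have h11 : revAt 1 1 = 0 := by rw [revAt_le (by norm_num)]
    rw [h11, hCm1, pow_zero, pow_one]
    ring
  rw [r1, r2, r3]
  ring

lemma APoly_coeff_reflect (l : ℕ) (hl : 0 < l) {j : ℕ} (hj : j ≤ 2 * l + 1) :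
    (APoly l).coeff (2 * l + 1 - j) = -((APoly l).coeff j) := by
  have h := congrArg (fun p => Polynomial.coeff p j) (reflect_APoly l hl)
  simpa [Polynomial.coeff_reflect, revAt_le hj] using h

lemma key_sum (l d : ℕ) (hl : 0 < l) :
    ∑ r ∈ Finset.range (2 * l + 2),
      (APoly l).coeff r * (-1) ^ r * ((2 * l + 2 * d + 1 + r).choose (2 * l + d + 1) : ℚ) = 0 := by
  have hdeg : (APoly l).natDegree < 2 * l + 2 :=
    lt_of_le_of_lt (APoly_natDegree_le l hl) (by omega)
  have hcomp : (APoly l).comp (-(X + 1)) = -(APoly l) := by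
    unfold APoly
    simp only [mul_comp, pow_comp, add_comp, sub_comp, X_comp, one_comp]
    have htwo : ((2 : Polynomial ℚ)).comp (-(X+1)) = 2 := by
      norm_num
    rw [htwo]
    have hb : ((-(X + 1) : Polynomial ℚ)) ^ 2 + (-(X + 1)) + 1 = X ^ 2 + X + 1 := by ring
    rw [hb]
    ring
  have hsum : (APoly l).comp (-(X + 1)) =
      ∑ r ∈ Finset.range (2 * l + 2), C ((APoly l).coeff r) * (-(X + 1)) ^ r := by
    rw [comp_eq_sum_left]
    exact Polynomial.sum_over_range' _ (by simp) _ hdeg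
  have h2 : (((X + 1 : Polynomial ℚ)) ^ (2 * l + 2 * d + 1) * ((APoly l).comp (-(X + 1)))).coeff
        (2 * l + d + 1)
      = ∑ r ∈ Finset.range (2 * l + 2),
          (APoly l).coeff r * (-1) ^ r *
            ((2 * l + 2 * d + 1 + r).choose (2 * l + d + 1) : ℚ) := by
    rw [hsum, Finset.mul_sum, Polynomial.finset_sum_coeff]
    refine Finset.sum_congr rfl ?_
    intro r _
    have hterm : ((X + 1 : Polynomial ℚ)) ^ (2 * l + 2 * d + 1) *
        (C ((APoly l).coeff r) * (-(X + 1)) ^ r)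
        = C ((APoly l).coeff r * (-1) ^ r) * (X + 1) ^ (2 * l + 2 * d + 1 + r) := by
      rw [neg_pow, pow_add, C_mul, C_pow, map_neg, C_1]
      ring
    rw [hterm, Polynomial.coeff_C_mul, Polynomial.coeff_X_add_one_pow]
  -- the middle coefficient of (X+1)^N * APoly l vanishes
  have hz : ((APoly l) * ((X + 1 : Polynomial ℚ)) ^ (2 * l + 2 * d + 1)).coeff (2 * l + d + 1)
      = 0 := by
    rw [Polynomial.coeff_mul, Finset.Nat.sum_antidiagonal_eq_sum_range_succ_mk]
    have htrunc : ∑ j ∈ Finset.range (2 * l + d + 1 + 1),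
          (APoly l).coeff j *
            (((X + 1 : Polynomial ℚ)) ^ (2 * l + 2 * d + 1)).coeff (2 * l + d + 1 - j)
        = ∑ j ∈ Finset.range (2 * l + 2),
          (APoly l).coeff j *
            (((X + 1 : Polynomial ℚ)) ^ (2 * l + 2 * d + 1)).coeff (2 * l + d + 1 - j) := by
      symm
      refine Finset.sum_subset (Finset.range_subset_range.2 (by omega)) ?_
      intro j hj hj2
      have hjge : 2 * l + 2 ≤ j := by
        simpa using hj2
      have : (APoly l).coeff j = 0 :=
        Polynomial.coeff_eq_zero_of_natDegree_lt (by omega)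
      simp [this]
    rw [htrunc]
    set c := ∑ j ∈ Finset.range (2 * l + 2),
        (APoly l).coeff j *
          (((X + 1 : Polynomial ℚ)) ^ (2 * l + 2 * d + 1)).coeff (2 * l + d + 1 - j) with hc
    have hrefl := Finset.sum_range_reflect
      (fun j => (APoly l).coeff j *
        (((X + 1 : Polynomial ℚ)) ^ (2 * l + 2 * d + 1)).coeff (2 * l + d + 1 - j)) (2 * l + 2)
    have hneg : ∑ j ∈ Finset.range (2 * l + 2),
        (APoly l).coeff (2 * l + 2 - 1 - j) *
          (((X + 1 : Polynomial ℚ)) ^ (2 * l + 2 * d + 1)).coeff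
            (2 * l + d + 1 - (2 * l + 2 - 1 - j)) = -c := by
      rw [hc, ← Finset.sum_neg_distrib]
      refine Finset.sum_congr rfl ?_
      intro j hj
      have hj' : j ≤ 2 * l + 1 := by
        have := Finset.mem_range.1 hj
        omega
      rw [show 2 * l + 2 - 1 - j = 2 * l + 1 - j by omega, APoly_coeff_reflect l hl hj',
        Polynomial.coeff_X_add_one_pow, Polynomial.coeff_X_add_one_pow]
      have hch : (2 * l + 2 * d + 1).choose (2 * l + d + 1 - (2 * l + 1 - j))
          = (2 * l + 2 * d + 1).choose (2 * l + d + 1 - j) := by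
        rw [show 2 * l + d + 1 - (2 * l + 1 - j) = d + j by omega]
        rw [← Nat.choose_symm (show d + j ≤ 2 * l + 2 * d + 1 by omega)]
        congr 1
        omega
      rw [hch]
      ring
    rw [hrefl] at hneg
    linarith [hneg]
  calc ∑ r ∈ Finset.range (2 * l + 2),
        (APoly l).coeff r * (-1) ^ r * ((2 * l + 2 * d + 1 + r).choose (2 * l + d + 1) : ℚ)
      = (((X + 1 : Polynomial ℚ)) ^ (2 * l + 2 * d + 1) * ((APoly l).comp (-(X + 1)))).coeff
          (2 * l + d + 1) := h2.symm
    _ = -(((APoly l) * ((X + 1 : Polynomial ℚ)) ^ (2 * l + 2 * d + 1)).coeff (2 * l + d + 1)) := by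
        rw [hcomp]
        rw [show ((X + 1 : Polynomial ℚ)) ^ (2 * l + 2 * d + 1) * (-(APoly l))
          = -((APoly l) * ((X + 1 : Polynomial ℚ)) ^ (2 * l + 2 * d + 1)) by ring]
        rw [Polynomial.coeff_neg]
    _ = 0 := by rw [hz]; ring

lemma nat_core (l d r : ℕ) (hr : r ≤ 2 * l + 1) :
    (2 * l + 2 * d + 1).factorial * ((2 * l + 2 * d + 2).ascFactorial r) *
        ((2 * l + d + 1).descFactorial (2 * l + 1 - r))
      = (2 * l + d + 1).factorial * (2 * l + d + 1).factorial *
        ((2 * l + 2 * d + 1 + r).choose (2 * l + d + 1)) := by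
  have h1 : (2 * l + 2 * d + 1).factorial * (2 * l + 2 * d + 2).ascFactorial r
      = (2 * l + 2 * d + 1 + r).factorial := by
    have h := Nat.factorial_mul_ascFactorial (2 * l + 2 * d + 1) r
    simpa [show 2 * l + 2 * d + 1 + 1 = 2 * l + 2 * d + 2 from rfl] using h
  have h2 : (d + r).factorial * (2 * l + d + 1).descFactorial (2 * l + 1 - r)
      = (2 * l + d + 1).factorial := by
    have h := Nat.factorial_mul_descFactorial (n := 2 * l + d + 1) (k := 2 * l + 1 - r) (by omega)
    rwa [show 2 * l + d + 1 - (2 * l + 1 - r) = d + r by omega] at h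
  have h4 : (2 * l + 2 * d + 1 + r).choose (2 * l + d + 1) * (2 * l + d + 1).factorial *
      (d + r).factorial = (2 * l + 2 * d + 1 + r).factorial := by
    have h := Nat.choose_mul_factorial_mul_factorial
      (n := 2 * l + 2 * d + 1 + r) (k := 2 * l + d + 1) (by omega)
    rwa [show 2 * l + 2 * d + 1 + r - (2 * l + d + 1) = d + r by omega] at h
  apply Nat.eq_of_mul_eq_mul_left (Nat.factorial_pos (d + r))
  calc (d + r).factorial * ((2 * l + 2 * d + 1).factorial * ((2 * l + 2 * d + 2).ascFactorial r) *
        ((2 * l + d + 1).descFactorial (2 * l + 1 - r)))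
      = ((2 * l + 2 * d + 1).factorial * (2 * l + 2 * d + 2).ascFactorial r) *
        ((d + r).factorial * (2 * l + d + 1).descFactorial (2 * l + 1 - r)) := by ring
    _ = (2 * l + 2 * d + 1 + r).factorial * (2 * l + d + 1).factorial := by rw [h1, h2]
    _ = ((2 * l + 2 * d + 1 + r).choose (2 * l + d + 1) * (2 * l + d + 1).factorial *
        (d + r).factorial) * (2 * l + d + 1).factorial := by rw [h4]
    _ = (d + r).factorial * ((2 * l + d + 1).factorial * (2 * l + d + 1).factorial *
        ((2 * l + 2 * d + 1 + r).choose (2 * l + d + 1))) := by ring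

lemma core (l d : ℕ) (hl : 0 < l) :
    PP l (2 * ((l + 1 + d : ℕ) : ℚ)) (((l + 1 + d : ℕ) : ℚ) + l) = 0 := by
  unfold PP
  have h2n : (2 * ((l + 1 + d : ℕ) : ℚ)) = ((2 * l + 2 * d + 2 : ℕ) : ℚ) := by push_cast; ring
  have hnl : (-(((l + 1 + d : ℕ) : ℚ) + (l : ℚ))) = -(((2 * l + d + 1 : ℕ) : ℚ)) := by
    push_cast; ring
  rw [h2n]
  have key := key_sum l d hl
  have hfac : ((2 * l + 2 * d + 1).factorial : ℚ) ≠ 0 := by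
    exact_mod_cast Nat.factorial_ne_zero _
  calc ∑ r ∈ Finset.range (2 * l + 2),
        ((APoly l).coeff r : ℚ) * rf (((2 * l + 2 * d + 2 : ℕ) : ℚ)) r *
          rf (-((((l + 1 + d : ℕ) : ℚ)) + l)) (2 * l + 1 - r)
      = ∑ r ∈ Finset.range (2 * l + 2),
        (-(((2 * l + d + 1).factorial : ℚ) * ((2 * l + d + 1).factorial : ℚ) /
          ((2 * l + 2 * d + 1).factorial : ℚ))) *
          ((APoly l).coeff r * (-1) ^ r *
            ((2 * l + 2 * d + 1 + r).choose (2 * l + d + 1) : ℚ)) := by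
        refine Finset.sum_congr rfl ?_
        intro r hr
        have hr' : r ≤ 2 * l + 1 := by
          have := Finset.mem_range.1 hr
          omega
        rw [hnl, rf_natCast, rf_neg_natCast]
        have hsign : ((-1 : ℚ)) ^ (2 * l + 1 - r) = -(-1) ^ r := by
          have hmul : ((-1 : ℚ)) ^ (2 * l + 1 - r) * (-1) ^ r = (-1) ^ (2 * l + 1) := by
            rw [← pow_add]
            congr 1
            omega
          have hodd : ((-1 : ℚ)) ^ (2 * l + 1) = -1 := Odd.neg_one_pow ⟨l, by ring⟩
          have hr2 : ((-1 : ℚ)) ^ r * (-1) ^ r = 1 := by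
            rw [← mul_pow]
            norm_num
          calc ((-1 : ℚ)) ^ (2 * l + 1 - r)
              = ((-1 : ℚ)) ^ (2 * l + 1 - r) * ((-1) ^ r * (-1) ^ r) := by rw [hr2]; ring
            _ = (((-1 : ℚ)) ^ (2 * l + 1 - r) * (-1) ^ r) * (-1) ^ r := by ring
            _ = -(-1) ^ r := by rw [hmul, hodd]; ring
        rw [hsign]
        have hnat : ((2 * l + 2 * d + 1).factorial : ℚ) * ((2 * l + 2 * d + 2).ascFactorial r : ℚ) *
            ((2 * l + d + 1).descFactorial (2 * l + 1 - r) : ℚ)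
            = ((2 * l + d + 1).factorial : ℚ) * ((2 * l + d + 1).factorial : ℚ) *
              ((2 * l + 2 * d + 1 + r).choose (2 * l + d + 1) : ℚ) := by
          exact_mod_cast congrArg (Nat.cast : ℕ → ℚ) (nat_core l d r hr')
        field_simp
        linear_combination (-((APoly l).coeff r)) * hnat
    _ = (-(((2 * l + d + 1).factorial : ℚ) * ((2 * l + d + 1).factorial : ℚ) /
          ((2 * l + 2 * d + 1).factorial : ℚ))) *
        (∑ r ∈ Finset.range (2 * l + 2),
          (APoly l).coeff r * (-1) ^ r *
            ((2 * l + 2 * d + 1 + r).choose (2 * l + d + 1) : ℚ)) := by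
        rw [Finset.mul_sum]
    _ = 0 := by rw [key]; ring

theorem stmt7 (l : ℕ) (hl : 0 < l) (e : ℚ) :
    PP l (2 * e) (e + l) = 0 := by
  set Qp : Polynomial ℚ := ∑ r ∈ Finset.range (2 * l + 2),
    C ((APoly l).coeff r) * rf (2 * X) r * rf (-(X + (l : Polynomial ℚ))) (2 * l + 1 - r)
    with hQp
  have heval : ∀ x : ℚ, Qp.eval x = PP l (2 * x) (x + l) := by
    intro x
    rw [hQp]
    unfold PP
    rw [Polynomial.eval_finset_sum]
    refine Finset.sum_congr rfl ?_
    intro r _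
    rw [Polynomial.eval_mul, Polynomial.eval_mul, Polynomial.eval_C, eval_rf, eval_rf]
    simp [Rat.cast_id]
  have hroot : ∀ d : ℕ, Qp.IsRoot (((l + 1 + d : ℕ) : ℚ)) := by
    intro d
    have := core l d hl
    unfold Polynomial.IsRoot
    rw [heval]
    push_cast at this ⊢
    convert this using 2
  have hQ0 : Qp = 0 := by
    refine Qp.eq_zero_of_infinite_isRoot ?_
    refine Set.infinite_of_injective_forall_mem
      (f := fun d : ℕ => ((l + 1 + d : ℕ) : ℚ)) ?_ ?_
    · intro a b hab
      have h1 : ((l + 1 + a : ℕ) : ℚ) = ((l + 1 + b : ℕ) : ℚ) := hab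
      have h2 : (l + 1 + a : ℕ) = (l + 1 + b : ℕ) := Nat.cast_injective h1
      omega
    · intro d
      exact hroot d
  have := heval e
  rw [hQ0] at this
  simpa using this.symm

end
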